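/- Let y : [0, ∞) → ℝ be continuous and nonnegative, let g : [0, ∞) → ℝ be nonnegative and locally integrable, and let K ≥ 0 and C ≥ 0 be constants. Assume: (i) the energy inequality y(τ) + ∫_ξ^τ g(s) ds ≤ y(ξ) + K holds for all 0 ≤ ξ ≤ τ with τ − ξ ≤ 1; and (ii) the Poincaré-type inequality ∫_t^{t+1} y(s) ds ≤ C ∫_t^{t+1} g(s) ds holds for all t ≥ 0. Then y is uniformly bounded in time: y(t) ≤ y(0) + (3 + C) K for all t ≥ 0. -/

import Mathlib

open MeasureTheory Filter

/-- (Abstract uniform-in-time energy estimate.) Let `y : [0,∞) → ℝ` be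
continuous and nonnegative, `g : [0,∞) → ℝ` nonnegative and locally integrable, and
`K, C ≥ 0`. Assume (i) the energy inequality `y(τ) + ∫_ξ^τ g ≤ y(ξ) + K` for all
`0 ≤ ξ ≤ τ` with `τ - ξ ≤ 1`, and (ii) the Poincaré-type inequality
`∫_t^{t+1} y ≤ C ∫_t^{t+1} g` for all `t ≥ 0`. Then `y(t) ≤ y(0) + (3 + C) K` for all
`t ≥ 0`. -/
theorem uniform_energy_bound (y g : ℝ → ℝ) (K C : ℝ) (hK : 0 ≤ K) (hC : 0 ≤ C)
    (hy_cont : ContinuousOn y (Set.Ici 0))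
    (hy_nonneg : ∀ t ≥ (0 : ℝ), 0 ≤ y t)
    (hg_nonneg : ∀ t ≥ (0 : ℝ), 0 ≤ g t)
    (hg_loc : LocallyIntegrableOn g (Set.Ici 0))
    (henergy : ∀ ξ τ : ℝ, 0 ≤ ξ → ξ ≤ τ → τ - ξ ≤ 1 →
      y τ + ∫ s in Set.Ioc ξ τ, g s ≤ y ξ + K)
    (hpoincare : ∀ t ≥ (0 : ℝ),
      ∫ s in Set.Ioc t (t + 1), y s ≤ C * ∫ s in Set.Ioc t (t + 1), g s) :
    ∀ t ≥ (0 : ℝ), y t ≤ y 0 + (3 + C) * K := by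
  have hy0 : 0 ≤ y 0 := hy_nonneg 0 le_rfl
  -- key induction: y t ≤ y 0 + (1+C)*K on [0, n]
  have key : ∀ n : ℕ, ∀ t : ℝ, 0 ≤ t → t ≤ n → y t ≤ y 0 + (1 + C) * K := by
    intro n
    induction n with
    | zero =>
      intro t ht htn
      have ht0 : t = 0 := le_antisymm (by exact_mod_cast htn) ht
      subst ht0
      nlinarith
    | succ n ih =>
      intro t ht htn
      by_cases hcase : t ≤ n
      · exact ih t ht hcase
      push_neg at hcase
      have htn' : t ≤ (n : ℝ) + 1 := by exact_mod_cast htn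
      rcases Nat.eq_zero_or_pos n with hn0 | hn1
      · -- t ∈ (0, 1]
        subst hn0
        have h1 : t ≤ 1 := by simpa using htn'
        have he := henergy 0 t le_rfl ht (by linarith)
        have hgint : 0 ≤ ∫ s in Set.Ioc 0 t, g s := by
          apply setIntegral_nonneg measurableSet_Ioc
          intro x hx
          exact hg_nonneg x hx.1.le
        nlinarith
      · -- n ≥ 1, so t - 1 ≥ 0
        have hn1' : (1 : ℝ) ≤ (n : ℝ) := by exact_mod_cast hn1
        have ht1 : (0 : ℝ) ≤ t - 1 := by
          have : (n : ℝ) < t := by exact_mod_cast hcase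
          linarith
        have ht1n : t - 1 ≤ (n : ℝ) := by linarith
        have hyprev : y (t - 1) ≤ y 0 + (1 + C) * K := ih (t - 1) ht1 ht1n
        have hsub : Set.Icc (t - 1) t ⊆ Set.Ici (0 : ℝ) := fun x hx => le_trans ht1 hx.1
        -- integrability of y on [t-1, t]
        have hyint : IntegrableOn y (Set.Ioc (t - 1) t) := by
          exact ((hy_cont.mono hsub).integrableOn_compact isCompact_Icc).mono_set
            Set.Ioc_subset_Icc_self
        -- minimum of y on [t-1, t]
        obtain ⟨ξ, hξmem, hξmin⟩ := isCompact_Icc.exists_isMinOn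
          (Set.nonempty_Icc.mpr (by linarith)) (hy_cont.mono hsub)
        have hξ0 : 0 ≤ ξ := le_trans ht1 hξmem.1
        -- y ξ ≤ ∫ y over Ioc (t-1) t
        have hmin : y ξ ≤ ∫ s in Set.Ioc (t - 1) t, y s := by
          have hmono := setIntegral_mono_on (g := y)
            ((integrableOn_const_iff).mpr (Or.inr (by simp [Real.volume_Ioc])))
            hyint measurableSet_Ioc
            (fun x hx => hξmin (Set.Ioc_subset_Icc_self hx))
          have hvol : ∫ _ in Set.Ioc (t - 1) t, y ξ = y ξ := by
            simp [Real.volume_Ioc]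
          linarith [hmono, hvol.ge, hvol.le]
        -- Poincaré at t-1
        have hpoin := hpoincare (t - 1) ht1
        rw [show t - 1 + 1 = t by ring] at hpoin
        -- energy over [t-1, t]
        have he1 := henergy (t - 1) t ht1 (by linarith) (by linarith)
        -- energy over [ξ, t]
        have he2 := henergy ξ t hξ0 hξmem.2 (by linarith [hξmem.1])
        have hgint2 : 0 ≤ ∫ s in Set.Ioc ξ t, g s := by
          apply setIntegral_nonneg measurableSet_Ioc
          intro x hx
          exact hg_nonneg x (le_trans hξ0 hx.1.le)
        set G := ∫ s in Set.Ioc (t - 1) t, g s with hG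
        -- y t ≤ y ξ + K ≤ C * G + K, and G ≤ y (t-1) + K - y t
        have hyt : y t ≤ C * G + K := by
          have : y ξ ≤ C * G := le_trans hmin hpoin
          linarith
        have hGb : G ≤ y (t - 1) + K - y t := by linarith
        nlinarith [mul_le_mul_of_nonneg_left hGb hC]
  intro t ht
  have h1 : y t ≤ y 0 + (1 + C) * K := key ⌈t⌉₊ t ht (Nat.le_ceil t)
  nlinarith
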